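/- A countable group G admits a left-invariant linear order if and only if there exists an injective group homomorphism from G into the group of order-preserving bijections of ℝ. -/

import Mathlib

open Function

noncomputable section LeftOrderableAux

/-! ### Extending an order automorphism of `ℚ` to `ℝ` -/

/-- The extension of an order automorphism of `ℚ` to `ℝ`, defined via suprema. -/
def ratExtFun (φ : ℚ ≃o ℚ) (x : ℝ) : ℝ :=
  sSup ((fun q : ℚ => ((φ q : ℚ) : ℝ)) '' {q : ℚ | (q : ℝ) < x})

lemma ratExt_set_nonempty (φ : ℚ ≃o ℚ) (x : ℝ) :
    ((fun q : ℚ => ((φ q : ℚ) : ℝ)) '' {q : ℚ | (q : ℝ) < x}).Nonempty := by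
  obtain ⟨q, hq⟩ := exists_rat_lt x
  exact ⟨_, ⟨q, hq, rfl⟩⟩

lemma ratExt_set_bddAbove (φ : ℚ ≃o ℚ) (x : ℝ) :
    BddAbove ((fun q : ℚ => ((φ q : ℚ) : ℝ)) '' {q : ℚ | (q : ℝ) < x}) := by
  obtain ⟨r, hr⟩ := exists_rat_gt x
  refine ⟨((φ r : ℚ) : ℝ), ?_⟩
  rintro y ⟨q, hq, rfl⟩
  have hq' : q < r := by exact_mod_cast hq.trans hr
  exact Rat.cast_le.2 (φ.le_iff_le.2 hq'.le)

lemma le_ratExtFun (φ : ℚ ≃o ℚ) {x : ℝ} {q : ℚ} (h : (q : ℝ) < x) :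
    ((φ q : ℚ) : ℝ) ≤ ratExtFun φ x :=
  le_csSup (ratExt_set_bddAbove φ x) ⟨q, h, rfl⟩

lemma ratExtFun_le_cast (φ : ℚ ≃o ℚ) {x : ℝ} {r : ℚ} (h : x ≤ (r : ℝ)) :
    ratExtFun φ x ≤ ((φ r : ℚ) : ℝ) := by
  refine csSup_le (ratExt_set_nonempty φ x) ?_
  rintro y ⟨q, hq, rfl⟩
  have hq' : q < r := by exact_mod_cast lt_of_lt_of_le hq h
  exact Rat.cast_le.2 (φ.le_iff_le.2 hq'.le)

lemma ratExtFun_cast (φ : ℚ ≃o ℚ) (q : ℚ) : ratExtFun φ (q : ℝ) = ((φ q : ℚ) : ℝ) := by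
  refine le_antisymm (ratExtFun_le_cast φ le_rfl) (le_of_forall_lt fun z hz => ?_)
  obtain ⟨r, hzr, hrq⟩ := exists_rat_btwn hz
  have hrq' : r < φ q := by exact_mod_cast hrq
  have h1 : φ.symm r < q := by
    have := φ.symm.lt_iff_lt.2 hrq'
    simpa using this
  have h2 : ((φ (φ.symm r) : ℚ) : ℝ) ≤ ratExtFun φ (q : ℝ) :=
    le_ratExtFun φ (by exact_mod_cast h1)
  rw [φ.apply_symm_apply] at h2
  exact lt_of_lt_of_le hzr h2

lemma ratExtFun_strictMono (φ : ℚ ≃o ℚ) : StrictMono (ratExtFun φ) := by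
  intro x y hxy
  obtain ⟨q, hxq, hqy⟩ := exists_rat_btwn hxy
  obtain ⟨q', hqq', hq'y⟩ := exists_rat_btwn hqy
  have hqq'' : q < q' := by exact_mod_cast hqq'
  calc ratExtFun φ x ≤ ((φ q : ℚ) : ℝ) := ratExtFun_le_cast φ hxq.le
    _ < ((φ q' : ℚ) : ℝ) := by exact_mod_cast φ.lt_iff_lt.2 hqq''
    _ ≤ ratExtFun φ y := le_ratExtFun φ hq'y

lemma ratExtFun_surjective (φ : ℚ ≃o ℚ) : Surjective (ratExtFun φ) := by
  intro y
  refine ⟨ratExtFun φ.symm y, le_antisymm ?_ (le_of_forall_lt fun z hz => ?_)⟩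
  · refine csSup_le (ratExt_set_nonempty φ _) ?_
    rintro w ⟨q, hq, rfl⟩
    obtain ⟨w', ⟨r, hr, rfl⟩, hqw⟩ :=
      exists_lt_of_lt_csSup (ratExt_set_nonempty φ.symm y) hq
    have h1 : q < φ.symm r := Rat.cast_lt.1 hqw
    have h2 : φ q < r := by
      have := φ.lt_iff_lt.2 h1
      simpa using this
    have : ((φ q : ℚ) : ℝ) < (r : ℝ) := by exact_mod_cast h2
    exact (this.trans hr).le
  · obtain ⟨r, hzr, hry⟩ := exists_rat_btwn hz
    obtain ⟨r', hrr', hr'y⟩ := exists_rat_btwn hry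
    obtain ⟨r'', hr'r'', hr''y⟩ := exists_rat_btwn hr'y
    have hrr : r' < r'' := by exact_mod_cast hr'r''
    have h1 : ((φ.symm r'' : ℚ) : ℝ) ≤ ratExtFun φ.symm y := le_ratExtFun φ.symm hr''y
    have h2 : φ.symm r' < φ.symm r'' := φ.symm.lt_iff_lt.2 hrr
    have h3 : ((φ.symm r' : ℚ) : ℝ) < ratExtFun φ.symm y :=
      lt_of_lt_of_le (by exact_mod_cast h2) h1
    have h4 : ((φ (φ.symm r') : ℚ) : ℝ) ≤ ratExtFun φ (ratExtFun φ.symm y) :=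
      le_ratExtFun φ h3
    rw [φ.apply_symm_apply] at h4
    exact lt_of_lt_of_le (hzr.trans hrr') h4

/-- The extension of an order automorphism of `ℚ` to an order automorphism of `ℝ`. -/
def ratExt (φ : ℚ ≃o ℚ) : ℝ ≃o ℝ :=
  StrictMono.orderIsoOfSurjective _ (ratExtFun_strictMono φ) (ratExtFun_surjective φ)

lemma ratExt_cast (φ : ℚ ≃o ℚ) (q : ℚ) : ratExt φ (q : ℝ) = ((φ q : ℚ) : ℝ) :=
  ratExtFun_cast φ q

/-- Two order automorphisms of `ℝ` agreeing on `ℚ` are equal. -/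
lemma orderIsoReal_ext {f g : ℝ ≃o ℝ} (h : ∀ q : ℚ, f (q : ℝ) = g (q : ℝ)) : f = g := by
  have hd : Dense (Set.range ((↑) : ℚ → ℝ)) := Rat.denseRange_cast
  have : ⇑f = ⇑g := by
    refine Continuous.ext_on hd f.continuous g.continuous ?_
    rintro _ ⟨q, rfl⟩
    exact h q
  exact DFunLike.coe_injective this

/-- The extension, as a group homomorphism. -/
def ratExtHom : (ℚ ≃o ℚ) →* (ℝ ≃o ℝ) :=
  MonoidHom.mk' ratExt fun φ ψ => by
    refine orderIsoReal_ext fun q => ?_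
    have h1 : (ratExt φ * ratExt ψ) (q : ℝ) = ratExt φ (ratExt ψ (q : ℝ)) := rfl
    have h2 : (φ * ψ) q = φ (ψ q) := rfl
    rw [h1, ratExt_cast, ratExt_cast, ratExt_cast, h2]

lemma ratExtHom_injective : Injective ratExtHom := by
  intro φ ψ h
  have : ∀ q : ℚ, φ q = ψ q := by
    intro q
    have := congrArg (fun f : ℝ ≃o ℝ => f (q : ℝ)) h
    simp only [ratExtHom, MonoidHom.mk'_apply, ratExt_cast] at this
    exact_mod_cast this
  exact DFunLike.coe_injective (funext this)

/-! ### The left-multiplication action on `G ×ₗ ℚ` -/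

variable {G : Type*} [Group G]

lemma mul_le_mul_left_iff' [LinearOrder G] (h : ∀ a b c : G, b ≤ c → a * b ≤ a * c)
    (a : G) {b c : G} : a * b ≤ a * c ↔ b ≤ c :=
  ⟨fun hh => by simpa [inv_mul_cancel_left] using h a⁻¹ _ _ hh, h a b c⟩

lemma mul_lt_mul_left_iff' [LinearOrder G] (h : ∀ a b c : G, b ≤ c → a * b ≤ a * c)
    (a : G) {b c : G} : a * b < a * c ↔ b < c := by
  simp only [lt_iff_le_not_ge, mul_le_mul_left_iff' h]

/-- Left multiplication as an order automorphism of `G ×ₗ ℚ`. -/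
def mulActLex [LinearOrder G] (h : ∀ a b c : G, b ≤ c → a * b ≤ a * c) (a : G) :
    Lex (G × ℚ) ≃o Lex (G × ℚ) where
  toFun p := toLex (a * (ofLex p).1, (ofLex p).2)
  invFun p := toLex (a⁻¹ * (ofLex p).1, (ofLex p).2)
  left_inv p := by simp [inv_mul_cancel_left]
  right_inv p := by simp [mul_inv_cancel_left]
  map_rel_iff' {p q} := by
    conv_rhs => rw [← toLex_ofLex p, ← toLex_ofLex q]
    simp only [Equiv.coe_fn_mk, Prod.Lex.le_iff, ofLex_toLex]
    rw [mul_lt_mul_left_iff' h a, mul_right_inj]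

lemma mulActLex_mul [LinearOrder G] (h : ∀ a b c : G, b ≤ c → a * b ≤ a * c) (a b : G)
    (p : Lex (G × ℚ)) : mulActLex h (a * b) p = mulActLex h a (mulActLex h b p) := by
  simp [mulActLex, mul_assoc]

end LeftOrderableAux

/-- A countable group admits a left-invariant linear order if and only if it
embeds into the group of order-preserving bijections of `ℝ`. -/
theorem countable_group_left_orderable_iff_embeds_in_orderIso_real
    (G : Type*) [Group G] [Countable G] :
    (∃ lo : LinearOrder G, ∀ a b c : G, lo.le b c → lo.le (a * b) (a * c)) ↔
    ∃ ρ : G →* (ℝ ≃o ℝ), Function.Injective ρ := by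
  constructor
  · rintro ⟨lo, hlo⟩
    letI := lo
    have hlo' : ∀ a b c : G, b ≤ c → a * b ≤ a * c := hlo
    -- `G ×ₗ ℚ` is a nonempty countable dense linear order without endpoints
    haveI : Countable (Lex (G × ℚ)) := Countable.of_equiv (G × ℚ) toLex
    haveI : Nonempty (Lex (G × ℚ)) := ⟨toLex (1, 0)⟩
    haveI : NoMaxOrder (Lex (G × ℚ)) := by
      refine ⟨fun p => ⟨toLex ((ofLex p).1, (ofLex p).2 + 1), ?_⟩⟩
      conv_lhs => rw [← toLex_ofLex p]
      exact Prod.Lex.lt_iff.2 (Or.inr ⟨rfl, lt_add_one _⟩)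
    haveI : NoMinOrder (Lex (G × ℚ)) := by
      refine ⟨fun p => ⟨toLex ((ofLex p).1, (ofLex p).2 - 1), ?_⟩⟩
      conv_rhs => rw [← toLex_ofLex p]
      exact Prod.Lex.lt_iff.2 (Or.inr ⟨rfl, sub_one_lt _⟩)
    haveI : DenselyOrdered (Lex (G × ℚ)) := by
      constructor
      intro p q hpq
      rw [← toLex_ofLex p, ← toLex_ofLex q, Prod.Lex.lt_iff] at hpq
      rcases hpq with h1 | ⟨h1, h2⟩
      · refine ⟨toLex ((ofLex p).1, (ofLex p).2 + 1), ?_, ?_⟩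
        · conv_lhs => rw [← toLex_ofLex p]
          exact Prod.Lex.lt_iff.2 (Or.inr ⟨rfl, lt_add_one _⟩)
        · conv_rhs => rw [← toLex_ofLex q]
          exact Prod.Lex.lt_iff.2 (Or.inl h1)
      · obtain ⟨m, hm1, hm2⟩ := exists_between h2
        refine ⟨toLex ((ofLex p).1, m), ?_, ?_⟩
        · conv_lhs => rw [← toLex_ofLex p]
          exact Prod.Lex.lt_iff.2 (Or.inr ⟨rfl, hm1⟩)
        · conv_rhs => rw [← toLex_ofLex q]
          exact Prod.Lex.lt_iff.2 (Or.inr ⟨h1, hm2⟩)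
    obtain ⟨e⟩ := Order.iso_of_countable_dense (Lex (G × ℚ)) ℚ
    -- the homomorphism `G →* (ℚ ≃o ℚ)`
    have hmapmul : ∀ a b : G,
        e.symm.trans ((mulActLex hlo' (a * b)).trans e) =
          (e.symm.trans ((mulActLex hlo' a).trans e)) *
            (e.symm.trans ((mulActLex hlo' b).trans e)) := by
      intro a b
      apply DFunLike.coe_injective
      funext q
      show e (mulActLex hlo' (a * b) (e.symm q)) =
        e (mulActLex hlo' a (e.symm (e (mulActLex hlo' b (e.symm q)))))
      rw [OrderIso.symm_apply_apply, mulActLex_mul]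
    let A : G →* (ℚ ≃o ℚ) :=
      MonoidHom.mk' (fun a => e.symm.trans ((mulActLex hlo' a).trans e)) hmapmul
    have hAinj : Function.Injective A := by
      refine (injective_iff_map_eq_one A).2 fun a ha => ?_
      have h1 : (A a) (e (toLex ((1 : G), (0 : ℚ)))) = e (toLex ((1 : G), (0 : ℚ))) := by
        rw [ha]; rfl
      have h2 : e (mulActLex hlo' a (e.symm (e (toLex ((1 : G), (0 : ℚ)))))) =
          e (toLex ((1 : G), (0 : ℚ))) := h1
      rw [OrderIso.symm_apply_apply] at h2
      have h3 := e.injective h2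
      have h4 := toLex.injective.eq_iff.1 (by simpa [mulActLex] using h3)
      exact h4
    refine ⟨ratExtHom.comp A, ?_⟩
    rw [MonoidHom.coe_comp]
    exact ratExtHom_injective.comp hAinj
  · rintro ⟨ρ, hρ⟩
    obtain ⟨u, hu⟩ : ∃ u : ℕ → ℚ, Function.Surjective u :=
      ⟨fun n => (Denumerable.eqv ℚ).symm n, (Denumerable.eqv ℚ).symm.surjective⟩
    set Φ : G → Lex (∀ _ : ℕ, ℝ) := fun g => toLex (fun n => ρ g ((u n : ℚ) : ℝ)) with hΦdef
    have hΦ : Function.Injective Φ := by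
      intro g h heq
      apply hρ
      refine orderIsoReal_ext fun q => ?_
      obtain ⟨n, rfl⟩ := hu q
      exact congrFun (toLex.injective heq) n
    refine ⟨LinearOrder.lift' Φ hΦ, fun a b c h => ?_⟩
    change Φ b ≤ Φ c at h
    change Φ (a * b) ≤ Φ (a * c)
    rcases h.lt_or_eq with hlt | heq
    · obtain ⟨i, hji, hii⟩ := hlt
      refine le_of_lt ⟨i, fun j hj => ?_, ?_⟩
      · show ρ (a * b) ((u j : ℚ) : ℝ) = ρ (a * c) ((u j : ℚ) : ℝ)
        rw [map_mul, map_mul]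
        show ρ a (ρ b ((u j : ℚ) : ℝ)) = ρ a (ρ c ((u j : ℚ) : ℝ))
        rw [show ρ b ((u j : ℚ) : ℝ) = ρ c ((u j : ℚ) : ℝ) from hji j hj]
      · show ρ (a * b) ((u i : ℚ) : ℝ) < ρ (a * c) ((u i : ℚ) : ℝ)
        rw [map_mul, map_mul]
        exact (ρ a).strictMono hii
    · rw [hΦ heq]
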